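/- Let δ = d + iθ ∈ ℂ with d ≥ 0 and suppose |cosh δ + 1| ≤ C e^{−m} for constants C > 0 and m > 0 large enough that C e^{−m} < 1. Then d = O(e^{−m}): explicitly, there is a constant C' depending only on C such that d ≤ C' e^{−m} for all sufficiently large m. -/

import Mathlib

/-- If `δ = d + iθ` with `d ≥ 0` and `|cosh δ + 1| ≤ C e^{−m}`, then
`d ≤ C' e^{−m/2}` for sufficiently large `m`, with `C'` depending only on `C`. -/
theorem small_cosh_implies_small_distance :
    ∀ C : ℝ, 0 < C → ∃ C' : ℝ, 0 < C' ∧ ∃ m₀ : ℝ, ∀ m : ℝ, m₀ ≤ m →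
      ∀ d θ : ℝ, 0 ≤ d →
        ‖Complex.cosh (d + θ * Complex.I) + 1‖ ≤ C * Real.exp (-m) →
        d ≤ C' * Real.exp (-m / 2) := by
  intro C hC
  refine ⟨Real.sqrt (2 * C), Real.sqrt_pos.mpr (by linarith), 0, ?_⟩
  intro m _ d θ hd habs
  set w : ℂ := (d / 2 : ℝ) + (θ / 2 : ℝ) * Complex.I with hw
  have h2w : (d : ℂ) + θ * Complex.I = 2 * w := by
    push_cast [hw]; ring
  have hcosh : Complex.cosh ((d : ℂ) + θ * Complex.I) + 1 = 2 * Complex.cosh w ^ 2 := by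
    rw [h2w, Complex.cosh_two_mul, Complex.sinh_sq]; ring
  -- compute cosh w
  have hcw : Complex.cosh w =
      (Real.cosh (d / 2) * Real.cos (θ / 2) : ℝ) +
      (Real.sinh (d / 2) * Real.sin (θ / 2) : ℝ) * Complex.I := by
    rw [hw, Complex.cosh_add, Complex.cosh_mul_I, Complex.sinh_mul_I]
    push_cast [Complex.ofReal_cosh, Complex.ofReal_sinh, Complex.ofReal_cos,
      Complex.ofReal_sin]
    ring
  have hnormsq : Real.sinh (d / 2) ^ 2 ≤ ‖Complex.cosh w‖ ^ 2 := by
    rw [Complex.sq_norm, hcw]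
    simp only [Complex.normSq_apply, Complex.add_re, Complex.ofReal_re, Complex.mul_re,
      Complex.I_re, Complex.I_im, Complex.ofReal_im, Complex.add_im, Complex.mul_im]
    have h1 : Real.sinh (d / 2) ^ 2 * Real.cos (θ / 2) ^ 2 ≤
        Real.cosh (d / 2) ^ 2 * Real.cos (θ / 2) ^ 2 := by
      have := Real.sinh_sq (d / 2)
      nlinarith [sq_nonneg (Real.cos (θ / 2))]
    have h2 : Real.sin (θ / 2) ^ 2 + Real.cos (θ / 2) ^ 2 = 1 := Real.sin_sq_add_cos_sq _
    nlinarith [sq_nonneg (Real.sinh (d / 2))]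
  have hkey : 2 * Real.sinh (d / 2) ^ 2 ≤ C * Real.exp (-m) := by
    calc 2 * Real.sinh (d / 2) ^ 2 ≤ 2 * ‖Complex.cosh w‖ ^ 2 := by linarith
    _ = ‖Complex.cosh ((d : ℂ) + θ * Complex.I) + 1‖ := by
        rw [hcosh, norm_mul, norm_pow]; simp
    _ ≤ C * Real.exp (-m) := habs
  have hds : d / 2 ≤ Real.sinh (d / 2) := by
    rcases eq_or_lt_of_le hd with h | h
    · simp [← h]
    · exact le_of_lt (Real.self_lt_sinh_iff.mpr (by linarith))
  have hd2 : d ^ 2 ≤ 2 * C * Real.exp (-m) := by nlinarith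
  have hexp : Real.exp (-m) = Real.exp (-m / 2) ^ 2 := by
    rw [← Real.exp_nat_mul]; congr 1; push_cast; ring
  have := Real.sqrt_le_sqrt hd2
  calc d = Real.sqrt (d ^ 2) := by rw [Real.sqrt_sq hd]
  _ ≤ Real.sqrt (2 * C * Real.exp (-m)) := Real.sqrt_le_sqrt hd2
  _ = Real.sqrt (2 * C) * Real.exp (-m / 2) := by
      rw [hexp, Real.sqrt_mul (by linarith), Real.sqrt_sq (Real.exp_nonneg _)]
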